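/- Let G be an ordered context-free grammar and let w be a string having a ≺_G-least parse tree. Then the rules chosen by the oCFG derivation of w (which at each step rewrites the leftmost nonterminal using the first rule, in the production order, that can be extended to a successful derivation of w), applied in order in a leftmost way, produce exactly the ≺_G-least parse tree of w. -/

import Mathlib

namespace Ocfg

/-- A symbol: nonterminal or terminal. -/
inductive Sym (N T : Type) : Type
  | nt : N → Sym N T
  | tm : T → Sym N T

/-- An (ordered) context-free grammar: each nonterminal has an ordered
list of right-hand sides; `start` is the start nonterminal. -/
structure OCFG (N T : Type) : Type where
  prods : N → List (List (Sym N T))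
  start : N

/-- Ordered ranked trees used as parse trees: terminal leaves, ε-leaves,
and internal nodes labelled by a nonterminal together with the index of
the rule applied there. -/
inductive PTree (N T : Type) : Type
  | leaf : T → PTree N T
  | eps  : PTree N T
  | node : N → ℕ → List (PTree N T) → PTree N T

mutual
/-- `ParseFrom G A w t`: `t` is a parse tree with root nonterminal `A`
and yield `w`. -/
inductive ParseFrom {N T : Type} (G : OCFG N T) : N → List T → PTree N T → Prop
  | epsNode (A : N) (i : ℕ) :
      (G.prods A)[i]? = some [] →
      ParseFrom G A [] (PTree.node A i [PTree.eps])
  | node (A : N) (i : ℕ) (r : List (Sym N T)) (w : List T) (cs : List (PTree N T)) :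
      (G.prods A)[i]? = some r → r ≠ [] → ParseSeq G r w cs →
      ParseFrom G A w (PTree.node A i cs)

/-- `ParseSeq G r w cs`: the trees `cs` match, in order, the symbols of `r`,
with concatenated yield `w`. -/
inductive ParseSeq {N T : Type} (G : OCFG N T) : List (Sym N T) → List T → List (PTree N T) → Prop
  | nil : ParseSeq G [] [] []
  | consTm (a : T) (r : List (Sym N T)) (w : List T) (cs : List (PTree N T)) :
      ParseSeq G r w cs →
      ParseSeq G (Sym.tm a :: r) (a :: w) (PTree.leaf a :: cs)
  | consNt (A : N) (t : PTree N T) (wA : List T) (r : List (Sym N T)) (w : List T)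
      (cs : List (PTree N T)) :
      ParseFrom G A wA t → ParseSeq G r w cs →
      ParseSeq G (Sym.nt A :: r) (wA ++ w) (t :: cs)
end

/-- The set `P_G(w)` of parse trees of `w`. -/
def parseTrees {N T : Type} (G : OCFG N T) (w : List T) : Set (PTree N T) :=
  {t | ParseFrom G G.start w t}

/-- `n(t)`: the sequence of rule indices of `t`, in pre-order. -/
def PTree.idxSeq {N T : Type} : PTree N T → List ℕ
  | .leaf _ => []
  | .eps => []
  | .node _ i cs => i :: (cs.attach.map (fun c => PTree.idxSeq c.1)).flatten
decreasing_by
  have := List.sizeOf_lt_of_mem c.2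
  simp_wf
  omega

/-- The order `≺_G` on parse trees: lexicographic comparison of the
pre-order rule-index sequences. -/
def treeLT {N T : Type} (t₁ t₂ : PTree N T) : Prop :=
  List.Lex (· < ·) t₁.idxSeq t₂.idxSeq

/-- One-step derivation relation `⇒` of the underlying CFG. -/
def OCFG.Step {N T : Type} (G : OCFG N T) (u v : List (Sym N T)) : Prop :=
  ∃ (u₁ u₂ : List (Sym N T)) (A : N) (r : List (Sym N T)),
    r ∈ G.prods A ∧ u = u₁ ++ Sym.nt A :: u₂ ∧ v = u₁ ++ r ++ u₂

/-- `⇒*`. -/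
def OCFG.Derives {N T : Type} (G : OCFG N T) : List (Sym N T) → List (Sym N T) → Prop :=
  Relation.ReflTransGen G.Step

/-- A nonterminal is useful if it occurs in some sentential form derivable from
the start symbol and derives some terminal string. -/
def Useful {N T : Type} (G : OCFG N T) (A : N) : Prop :=
  (∃ u₁ u₂ : List (Sym N T), G.Derives [Sym.nt G.start] (u₁ ++ Sym.nt A :: u₂)) ∧
  (∃ w : List T, G.Derives [Sym.nt A] (w.map Sym.tm))

/-- `G` is cyclic if `A ⇒⁺ A` for some nonterminal `A`. -/
def Cyclic {N T : Type} (G : OCFG N T) : Prop :=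
  ∃ A : N, Relation.TransGen G.Step [Sym.nt A] [Sym.nt A]

/-- `G` has no ε-rules. -/
def NoEpsRules {N T : Type} (G : OCFG N T) : Prop :=
  ∀ (A : N) (r : List (Sym N T)), r ∈ G.prods A → r ≠ []

/-- A unit-rule step: `A → B` is a rule of `G`. -/
def UnitStep {N T : Type} (G : OCFG N T) (A B : N) : Prop :=
  [Sym.nt B] ∈ G.prods A

/-- `G` has a cycle of unit rules. -/
def HasUnitCycle {N T : Type} (G : OCFG N T) : Prop :=
  ∃ A : N, Relation.TransGen (UnitStep G) A A

/-- `G` is well-ordered: for every string `w`, every nonempty subset of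
`P_G(w)` has a `≺_G`-least element. -/
def WellOrderedG {N T : Type} (G : OCFG N T) : Prop :=
  ∀ (w : List T) (Φ : Set (PTree N T)), Φ ⊆ parseTrees G w → Φ.Nonempty →
    ∃ t ∈ Φ, ∀ t' ∈ Φ, t = t' ∨ treeLT t t'

/-- `t` is the `≺_G`-least parse tree of `w`. -/
def IsLeastTree {N T : Type} (G : OCFG N T) (w : List T) (t : PTree N T) : Prop :=
  ParseFrom G G.start w t ∧ ∀ t', ParseFrom G G.start w t' → t = t' ∨ treeLT t t'

/-- `G` has least parse trees. -/
def HasLeastTrees {N T : Type} (G : OCFG N T) : Prop :=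
  ∀ w : List T, (parseTrees G w).Nonempty → ∃ t, IsLeastTree G w t

/-- Derivations of a given length (number of steps). -/
inductive DerivesIn {N T : Type} (G : OCFG N T) : List (Sym N T) → List (Sym N T) → ℕ → Prop
  | refl (u : List (Sym N T)) : DerivesIn G u u 0
  | step (u v w : List (Sym N T)) (n : ℕ) :
      G.Step u v → DerivesIn G v w n → DerivesIn G u w (n + 1)

/-- Number of rule applications in a parse tree (= length of the
corresponding leftmost derivation). -/
def PTree.numRules {N T : Type} : PTree N T → ℕ
  | .leaf _ => 0
  | .eps => 0
  | .node _ _ cs => 1 + ((cs.attach.map (fun c => PTree.numRules c.1)).foldr (· + ·) 0)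
decreasing_by
  have := List.sizeOf_lt_of_mem c.2
  simp_wf
  omega

/-- Height of a tree: a single leaf has height 0. -/
def PTree.height {N T : Type} : PTree N T → ℕ
  | .leaf _ => 0
  | .eps => 0
  | .node _ _ cs => 1 + ((cs.attach.map (fun c => PTree.height c.1)).foldr max 0)
decreasing_by
  have := List.sizeOf_lt_of_mem c.2
  simp_wf
  omega

/-- The language of `G`. -/
def langOf {N T : Type} (G : OCFG N T) : Language T :=
  {w | ∃ t, ParseFrom G G.start w t}

end Ocfg

namespace Ocfg

/-- `ODeriv G w u L`: the deterministic oCFG (leftmost) derivation of `w`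
starting from the sentential form `u` succeeds, choosing the rule indices
`L` (in order).  At each step the leftmost nonterminal is rewritten with
the first rule (in production order) whose application can be completed
to a derivation of the full string `w`. -/
inductive ODeriv {N T : Type} (G : OCFG N T) (w : List T) : List (Sym N T) → List ℕ → Prop
  | done : ODeriv G w (w.map Sym.tm) []
  | step (u₁ : List T) (A : N) (u₂ : List (Sym N T)) (i : ℕ) (r : List (Sym N T)) (L : List ℕ) :
      (G.prods A)[i]? = some r →
      ODeriv G w (u₁.map Sym.tm ++ r ++ u₂) L →
      (∀ (j : ℕ) (r' : List (Sym N T)), j < i → (G.prods A)[j]? = some r' →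
        ¬ G.Derives (u₁.map Sym.tm ++ r' ++ u₂) (w.map Sym.tm)) →
      ODeriv G w (u₁.map Sym.tm ++ Sym.nt A :: u₂) (i :: L)

end Ocfg

open Ocfg

namespace Ocfg
variable {N T : Type} {G : OCFG N T}

lemma idxSeq_node (A : N) (i : ℕ) (cs : List (PTree N T)) :
    (PTree.node A i cs).idxSeq = i :: (cs.map PTree.idxSeq).flatten := by
  rw [PTree.idxSeq]; simp

/-- Concatenated index sequences of a forest. -/
def fidx (cs : List (PTree N T)) : List ℕ := (cs.map PTree.idxSeq).flatten

@[simp] lemma fidx_nil : fidx ([] : List (PTree N T)) = [] := rfl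
@[simp] lemma fidx_cons (t : PTree N T) (cs : List (PTree N T)) :
    fidx (t :: cs) = t.idxSeq ++ fidx cs := rfl
@[simp] lemma fidx_append (cs ds : List (PTree N T)) :
    fidx (cs ++ ds) = fidx cs ++ fidx ds := by
  simp [fidx]

lemma seqAppend {r₁ r₂ : List (Sym N T)} {v₁ v₂ : List T} {cs₁ cs₂ : List (PTree N T)}
    (h₁ : ParseSeq G r₁ v₁ cs₁) (h₂ : ParseSeq G r₂ v₂ cs₂) :
    ParseSeq G (r₁ ++ r₂) (v₁ ++ v₂) (cs₁ ++ cs₂) := by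
  induction r₁ generalizing v₁ cs₁ with
  | nil => cases h₁; simpa
  | cons s r₁ ih =>
      cases h₁ with
      | consTm a r w cs h' => exact ParseSeq.consTm a _ _ _ (ih h')
      | consNt A t wA r w cs hf h' =>
          rw [List.append_assoc]
          exact ParseSeq.consNt A t wA _ _ _ hf (ih h')

lemma seqSplit {r₁ r₂ : List (Sym N T)} {v : List T} {cs : List (PTree N T)}
    (h : ParseSeq G (r₁ ++ r₂) v cs) :
    ∃ v₁ v₂ cs₁ cs₂, v = v₁ ++ v₂ ∧ cs = cs₁ ++ cs₂ ∧
      ParseSeq G r₁ v₁ cs₁ ∧ ParseSeq G r₂ v₂ cs₂ := by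
  induction r₁ generalizing v cs with
  | nil => exact ⟨[], v, [], cs, rfl, rfl, ParseSeq.nil, h⟩
  | cons s r₁ ih =>
      cases h with
      | consTm a r w cs h' =>
          obtain ⟨v₁, v₂, cs₁, cs₂, rfl, rfl, hp₁, hp₂⟩ := ih h'
          exact ⟨a :: v₁, v₂, PTree.leaf a :: cs₁, cs₂, rfl, rfl,
            ParseSeq.consTm a _ _ _ hp₁, hp₂⟩
      | consNt A t wA r w cs hf h' =>
          obtain ⟨v₁, v₂, cs₁, cs₂, rfl, rfl, hp₁, hp₂⟩ := ih h'
          exact ⟨wA ++ v₁, v₂, t :: cs₁, cs₂, by simp, rfl,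
            ParseSeq.consNt A t wA _ _ _ hf hp₁, hp₂⟩

lemma tmYield {l : List T} {v : List T} {cs : List (PTree N T)}
    (h : ParseSeq G (l.map Sym.tm) v cs) : v = l := by
  induction l generalizing v cs with
  | nil => cases h; rfl
  | cons a l ih => cases h with | consTm _ _ w cs h' => rw [ih h']

lemma leavesParse (v : List T) :
    ParseSeq G (v.map Sym.tm) v (v.map PTree.leaf) := by
  induction v with
  | nil => exact ParseSeq.nil
  | cons a v ih => exact ParseSeq.consTm a _ _ _ ih

/-- Build a parse tree for `A` from a rule and a forest for its rhs. -/
lemma mkTree {A : N} {j : ℕ} {r : List (Sym N T)} {v : List T} {ds : List (PTree N T)}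
    (hj : (G.prods A)[j]? = some r) (hp : ParseSeq G r v ds) :
    ∃ t : PTree N T, ParseFrom G A v t ∧ t.idxSeq = j :: fidx ds := by
  by_cases hr : r = []
  · subst hr
    cases hp
    exact ⟨PTree.node A j [PTree.eps], ParseFrom.epsNode A j hj, by simp [idxSeq_node, PTree.idxSeq]⟩
  · exact ⟨PTree.node A j ds, ParseFrom.node A j r v ds hj hr hp, by simp [idxSeq_node, fidx]⟩

lemma derivesToSeq {u : List (Sym N T)} {w : List T}
    (h : G.Derives u (w.map Sym.tm)) : ∃ cs, ParseSeq G u w cs := by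
  induction h using Relation.ReflTransGen.head_induction_on with
  | refl => exact ⟨w.map PTree.leaf, leavesParse w⟩
  | head hstep _ ih =>
      obtain ⟨cs, hcs⟩ := ih
      obtain ⟨u₁, u₂, A, r, hr, rfl, rfl⟩ := hstep
      rw [List.append_assoc] at hcs
      obtain ⟨v₁, v₂₃, cs₁, cs₂₃, rfl, rfl, hp₁, hp₂₃⟩ := seqSplit (r₁ := u₁) hcs
      obtain ⟨v₂, v₃, ds, cs₃, rfl, rfl, hp₂, hp₃⟩ := seqSplit (r₁ := r) hp₂₃
      obtain ⟨j, hjlt, hj⟩ := List.getElem_of_mem hr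
      obtain ⟨t, hft, -⟩ := mkTree (j := j) (by rw [List.getElem?_eq_getElem hjlt, hj]) hp₂
      exact ⟨cs₁ ++ t :: cs₃, seqAppend hp₁ (ParseSeq.consNt A t v₂ _ _ _ hft hp₃)⟩

end Ocfg

namespace Ocfg
variable {N T : Type} {G : OCFG N T}

@[simp] lemma idxSeq_leaf (a : T) : (PTree.leaf a : PTree N T).idxSeq = [] := by
  rw [PTree.idxSeq]
@[simp] lemma idxSeq_eps : (PTree.eps : PTree N T).idxSeq = [] := by
  rw [PTree.idxSeq]

/-- `≤` in the lexicographic order on index sequences. -/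
def leq (a b : List ℕ) : Prop := a = b ∨ List.Lex (· < ·) a b

lemma leq_strip {i : ℕ} {x y : List ℕ} (h : leq (i :: x) (i :: y)) : leq x y := by
  rcases h with h | h
  · left; injection h
  · cases h with
    | rel h => exact absurd h (lt_irrefl i)
    | cons h => exact Or.inr h

lemma not_leq_lt {i j : ℕ} (hj : j < i) {x y : List ℕ} : ¬ leq (i :: x) (j :: y) := by
  rintro (h | h)
  · injection h with h1 _; omega
  · cases h with
    | rel h => omega
    | cons h => omega

lemma notDerives {w u₁ : List T} {A : N} {r₂ : List (Sym N T)} {i : ℕ} {tail : List ℕ}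
    (H : ∀ cs' v', ParseSeq G (Sym.nt A :: r₂) v' cs' → u₁ ++ v' = w →
      leq (i :: tail) (fidx cs')) :
    ∀ (j : ℕ) (r' : List (Sym N T)), j < i → (G.prods A)[j]? = some r' →
      ¬ G.Derives (u₁.map Sym.tm ++ r' ++ r₂) (w.map Sym.tm) := by
  intro j r' hj hjr hd
  obtain ⟨cs'', hcs⟩ := derivesToSeq hd
  rw [List.append_assoc] at hcs
  obtain ⟨v₁, v₂₃, cs₁, cs₂₃, heq, rfl, hp₁, hp₂₃⟩ := seqSplit hcs
  have hv₁ := tmYield hp₁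
  obtain ⟨v₂, v₃, ds, es, rfl, rfl, hp₂, hp₃⟩ := seqSplit hp₂₃
  obtain ⟨t, hft, hidx⟩ := mkTree hjr hp₂
  have hH := H (t :: es) (v₂ ++ v₃) (ParseSeq.consNt A t v₂ _ _ _ hft hp₃)
    (by rw [heq, hv₁])
  rw [fidx_cons, hidx] at hH
  exact not_leq_lt hj hH

lemma sizeOf_append (l₁ l₂ : List (PTree N T)) :
    sizeOf (l₁ ++ l₂) + 1 = sizeOf l₁ + sizeOf l₂ := by
  induction l₁ with
  | nil => simp; omega
  | cons a l ih => simp at ih ⊢; omega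

lemma main {w : List T} : ∀ (n : ℕ) (cs : List (PTree N T)) (r : List (Sym N T)) (v u₁ : List T),
    sizeOf cs < n → ParseSeq G r v cs → u₁ ++ v = w →
    (∀ cs' v', ParseSeq G r v' cs' → u₁ ++ v' = w → leq (fidx cs) (fidx cs')) →
    ODeriv G w (u₁.map Sym.tm ++ r) (fidx cs) := by
  intro n
  induction n with
  | zero => intro cs _ _ _ h; omega
  | succ n ih =>
    intro cs r v u₁ hsz hps hyield H
    cases hps with
    | nil =>
        simp only [List.append_nil] at hyield ⊢
        subst hyield
        simpa [fidx] using ODeriv.done (G := G)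
    | consTm a r' v' cs' hp' =>
        have hgoal : ODeriv G w ((u₁ ++ [a]).map Sym.tm ++ r') (fidx cs') := by
          refine ih cs' r' v' (u₁ ++ [a]) ?_ hp' (by simpa using hyield) ?_
          · simp at hsz ⊢; omega
          · intro cs'' v'' hp'' heq''
            have := H (PTree.leaf a :: cs'') (a :: v'')
              (ParseSeq.consTm a _ _ _ hp'') (by simpa using heq'')
            simpa [fidx] using this
        simpa [fidx] using hgoal
    | consNt A t₀ wA r' v' cs' hft hp' =>
        cases hft with
        | epsNode _ i hi =>
            simp only [List.nil_append] at hyield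
            have hstrip : ∀ cs'' v'', ParseSeq G r' v'' cs'' → u₁ ++ v'' = w →
                leq (fidx cs') (fidx cs'') := by
              intro cs'' v'' hp'' heq''
              have := H (PTree.node A i [PTree.eps] :: cs'') ([] ++ v'')
                (ParseSeq.consNt A _ [] _ _ _ (ParseFrom.epsNode A i hi) hp'')
                (by simpa using heq'')
              simp only [fidx_cons, idxSeq_node] at this
              simpa using leq_strip (by simpa [fidx] using this)
            have hrec : ODeriv G w (u₁.map Sym.tm ++ [] ++ r') (fidx cs') := by
              have := ih cs' r' v' u₁ (by simp at hsz ⊢; omega) hp' hyield hstrip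
              simpa using this
            have hmin := notDerives (G := G) (w := w) (u₁ := u₁) (A := A) (r₂ := r') (i := i)
              (tail := fidx cs') ?_
            · have := ODeriv.step u₁ A r' i [] (fidx cs') hi hrec hmin
              simpa [fidx, idxSeq_node] using this
            · intro cs'' v'' hp'' heq''
              have := H cs'' v'' hp'' heq''
              simpa [fidx, idxSeq_node] using this
        | node _ i rhs _ children hi hne hpc =>
            have hstrip : ∀ cs'' v'', ParseSeq G (rhs ++ r') v'' cs'' → u₁ ++ v'' = w →
                leq (fidx (children ++ cs')) (fidx cs'') := by
              intro cs'' v'' hp'' heq''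
              obtain ⟨v₂, v₃, ds, es, rfl, rfl, hp₂, hp₃⟩ := seqSplit hp''
              have := H (PTree.node A i ds :: es) (v₂ ++ v₃)
                (ParseSeq.consNt A _ v₂ _ _ _ (ParseFrom.node A i rhs v₂ ds hi hne hp₂) hp₃)
                heq''
              simp only [fidx_cons, idxSeq_node] at this
              have := leq_strip (x := fidx (children ++ cs')) (y := fidx (ds ++ es))
                (by simpa [fidx] using this)
              simpa using this
            have hrec : ODeriv G w (u₁.map Sym.tm ++ rhs ++ r') (fidx (children ++ cs')) := by
              have hsz' : sizeOf (children ++ cs') < n := by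
                have h1 := sizeOf_append children cs'
                simp at hsz
                omega
              have := ih (children ++ cs') (rhs ++ r') (wA ++ v') u₁ hsz'
                (seqAppend hpc hp') (by simpa using hyield) hstrip
              simpa [List.append_assoc] using this
            have hmin := notDerives (G := G) (w := w) (u₁ := u₁) (A := A) (r₂ := r') (i := i)
              (tail := fidx (children ++ cs')) ?_
            · have := ODeriv.step u₁ A r' i rhs (fidx (children ++ cs')) hi hrec hmin
              simpa [fidx, idxSeq_node] using this
            · intro cs'' v'' hp'' heq''
              have := H cs'' v'' hp'' heq''
              simpa [fidx, idxSeq_node] using this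

end Ocfg

/-- If `w` has a `≺_G`-least parse tree `t`, then the oCFG
derivation of `w` (the deterministic leftmost derivation choosing at each step
the first rule completable to a derivation of `w`) uses exactly the rules of
`t`, in pre-order: its index sequence is `n(t)`. -/
theorem stmt12 {N T : Type} (G : OCFG N T) (w : List T) (t : PTree N T)
    (hleast : IsLeastTree G w t) :
    ODeriv G w [Sym.nt G.start] t.idxSeq := by
  have hps : ParseSeq G [Sym.nt G.start] w [t] := by
    have := ParseSeq.consNt G.start t w [] [] [] hleast.1 ParseSeq.nil
    simpa using this
  have H : ∀ cs' v', ParseSeq G [Sym.nt G.start] v' cs' → [] ++ v' = w →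
      leq (fidx [t]) (fidx cs') := by
    intro cs' v' hp' heq'
    simp only [List.nil_append] at heq'
    cases hp' with
    | consNt A t' wA r w' cs'' hft' hp'' =>
        cases hp''
        simp only [List.append_nil] at heq'
        subst heq'
        rcases hleast.2 t' hft' with h | h
        · left; simp [fidx, h]
        · right; simpa [fidx, treeLT] using h
  have := main (G := G) (w := w) (sizeOf [t] + 1) [t] [Sym.nt G.start] w []
    (by omega) hps (by simp) H
  simpa [fidx] using this
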